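/- Let X₂ = (2A−1)·2^{k} with A, k natural numbers, k ≥ 1. Then for every natural number r ≥ 2, T_{2^r±1}(X₂) ≡ X₂ + 2^{k+r} (mod 2^{k+r+1}). -/

import Mathlib

open Polynomial Polynomial.Chebyshev

private lemma evalT_two_mul (x : ℤ) (n : ℤ) :
    (T ℤ (2 * n)).eval x = 2 * (T ℤ n).eval x ^ 2 - 1 := by
  have h := T_mul_T ℤ n n
  rw [show n + n = 2 * n by ring, show n - n = 0 by ring, T_zero] at h
  have h2 := congrArg (Polynomial.eval x) h
  simp at h2
  linear_combination -h2

private lemma evalT_two_mul_add (x : ℤ) (n δ : ℤ) (hδ : δ = 1 ∨ δ = -1) :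
    (T ℤ (2 * n + δ)).eval x = 2 * (T ℤ (n + δ)).eval x * (T ℤ n).eval x - x := by
  have h := T_mul_T ℤ (n + δ) n
  rw [show n + δ + n = 2 * n + δ by ring, show n + δ - n = δ by ring] at h
  have hTδ : T ℤ δ = X := by
    rcases hδ with rfl | rfl
    · exact T_one ℤ
    · exact T_neg_one ℤ
  rw [hTδ] at h
  have h2 := congrArg (Polynomial.eval x) h
  simp at h2
  linear_combination -h2

private lemma evalT_two (x : ℤ) : (T ℤ 2).eval x = 2 * x ^ 2 - 1 := by
  rw [T_two]; simp

private lemma evalT_three (x : ℤ) : (T ℤ 3).eval x = 4 * x ^ 3 - 3 * x := by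
  have h := T_add_two ℤ 1
  norm_num at h
  rw [h]
  simp [T_two]
  ring

private lemma evalT_five (x : ℤ) : (T ℤ 5).eval x = 16 * x ^ 5 - 20 * x ^ 3 + 5 * x := by
  have h := evalT_two_mul_add x 2 1 (Or.inl rfl)
  norm_num at h
  rw [h, evalT_three, evalT_two]
  ring

private lemma evalT_pow2 (A k₀ : ℕ) (j : ℕ) :
    ∃ w : ℤ, (T ℤ ((2:ℤ) ^ (j + 2))).eval ((2 * (A:ℤ) - 1) * 2 ^ (1 + k₀)) =
      1 + 2 ^ (2 * k₀ + 2 * j + 5) * w := by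
  set x : ℤ := (2 * (A:ℤ) - 1) * 2 ^ (1 + k₀) with hx
  induction j with
  | zero =>
    refine ⟨(2 * (A:ℤ) - 1) ^ 4 * 2 ^ (2 * k₀ + 2) - (2 * (A:ℤ) - 1) ^ 2, ?_⟩
    have h4 : ((2:ℤ) ^ (0 + 2)) = 2 * 2 := by norm_num
    rw [h4, evalT_two_mul, evalT_two, hx]
    ring
  | succ j ih =>
    obtain ⟨w, hw⟩ := ih
    refine ⟨w + 2 ^ (2 * k₀ + 2 * j + 4) * w ^ 2, ?_⟩
    have h4 : ((2:ℤ) ^ (j + 1 + 2)) = 2 * 2 ^ (j + 2) := by ring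
    rw [h4, evalT_two_mul, hw]
    ring

private lemma main_aux (A k₀ : ℕ) (δ : ℤ) (hδ : δ = 1 ∨ δ = -1) (j : ℕ) :
    ∃ c : ℤ, (T ℤ ((2:ℤ) ^ (2 + j) + δ)).eval ((2 * (A:ℤ) - 1) * 2 ^ (1 + k₀)) =
      (2 * (A:ℤ) - 1) * 2 ^ (1 + k₀) + 2 ^ (k₀ + j + 3) + 2 ^ (k₀ + j + 4) * c := by
  set x : ℤ := (2 * (A:ℤ) - 1) * 2 ^ (1 + k₀) with hx
  induction j with
  | zero =>
    rcases hδ with rfl | rfl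
    · refine ⟨(2 * (A:ℤ) - 1) ^ 5 * 2 ^ (4 * k₀ + 5)
        - 5 * (2 * (A:ℤ) - 1) ^ 3 * 2 ^ (2 * k₀ + 1) + A - 1, ?_⟩
      rw [show (2:ℤ) ^ (2 + 0) + 1 = 5 by norm_num, evalT_five, hx]
      ring
    · refine ⟨(2 * (A:ℤ) - 1) ^ 3 * 2 ^ (2 * k₀ + 1) - A, ?_⟩
      rw [show (2:ℤ) ^ (2 + 0) + (-1) = 3 by norm_num, evalT_three, hx]
      ring
  | succ j ih =>
    obtain ⟨c, hc⟩ := ih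
    obtain ⟨w, hw⟩ := evalT_pow2 A k₀ j
    refine ⟨c + 2 ^ (k₀ + j + 1) * w * (x + 2 ^ (k₀ + j + 3) + 2 ^ (k₀ + j + 4) * c), ?_⟩
    have h4 : ((2:ℤ) ^ (2 + (j + 1)) + δ) = 2 * 2 ^ (j + 2) + δ := by ring
    rw [h4, evalT_two_mul_add x _ δ hδ,
      show (2:ℤ) ^ (j + 2) + δ = 2 ^ (2 + j) + δ by ring, hc, hw]
    ring

/-- Let `X₂ = (2A−1)·2^k` with `A ≥ 1`, `k ≥ 1`. Then for every `r ≥ 2`,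
`T_{2^r±1}(X₂) ≡ X₂ + 2^{k+r} (mod 2^{k+r+1})` for both choices of sign in the degree. -/
theorem chebyshev_two_pow_pm_one_at_X2 (A k : ℕ) (hA : 1 ≤ A) (hk : 1 ≤ k)
    (r : ℕ) (hr : 2 ≤ r) (δ : ℤ) (hδ : δ = 1 ∨ δ = -1) :
    (Polynomial.Chebyshev.T ℤ ((2 : ℤ) ^ r + δ)).eval ((2 * (A : ℤ) - 1) * 2 ^ k) ≡
      (2 * (A : ℤ) - 1) * 2 ^ k + 2 ^ (k + r) [ZMOD 2 ^ (k + r + 1)] := by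
  obtain ⟨k₀, rfl⟩ := Nat.exists_eq_add_of_le hk
  obtain ⟨j, rfl⟩ := Nat.exists_eq_add_of_le hr
  obtain ⟨c, hc⟩ := main_aux A k₀ δ hδ j
  rw [show 1 + k₀ + (2 + j) = k₀ + j + 3 by omega]
  rw [Int.ModEq]
  rw [hc, show k₀ + j + 3 + 1 = k₀ + j + 4 by omega]
  exact Int.add_mul_emod_self_left ..
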